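/- Assume m ≥ 1 and let μ = d (m−1) denote the minimal value of the antitone tuple d. Let g : Fin (m+k) → ℚ be the nonincreasing rearrangement of the concatenation of d and f (modelling HN(D ⊕ F)). If there exists an e-permutation of (d, f), then e i = g i for every index i with g i < μ. -/

import Mathlib

/-- `P` dominates `Q`: every partial sum `∑_{i ≤ j} P i` is at least the
corresponding partial sum of `Q`, and the total sums agree. -/
def Dominates {n : ℕ} (P Q : Fin n → ℚ) : Prop :=
  (∀ j : Fin n, ∑ i ∈ Finset.Iic j, Q i ≤ ∑ i ∈ Finset.Iic j, P i) ∧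
  (∑ i, P i = ∑ i, Q i)
/-- The multiset of values of a slope tuple. -/
def valMS {n : ℕ} (s : Fin n → ℚ) : Multiset ℚ :=
  Finset.univ.val.map s

/-- `P` is an `e`-permutation of `(d, f)`. -/
def IsEPerm {m k : ℕ} (d : Fin m → ℚ) (f : Fin k → ℚ) (e P : Fin (m + k) → ℚ) : Prop :=
  valMS P = valMS d + valMS f ∧
  Dominates P e ∧
  ∀ i : Fin (m + k), (P i < e i → P i ∈ valMS d) ∧ (e i < P i → P i ∈ valMS f)

/-- `(SD, SF)` is a partition pair for the `e`-permutation `P` of `(d, f)`. -/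
def IsPartitionPair {m k : ℕ} (d : Fin m → ℚ) (f : Fin k → ℚ) (e P : Fin (m + k) → ℚ)
    (SD SF : Finset (Fin (m + k))) : Prop :=
  Disjoint SD SF ∧ SD ∪ SF = Finset.univ ∧
  SD.val.map P = valMS d ∧ (∀ i ∈ SD, P i ≤ e i) ∧
  SF.val.map P = valMS f ∧ (∀ j ∈ SF, e j ≤ P j)

/-- `P` is `(SD, SF)`-sorted: its values along `SD` (in increasing index order)
are exactly `d 0, …, d (m-1)`, and similarly for `SF` and `f`. -/
def IsSortedPair {m k : ℕ} (d : Fin m → ℚ) (f : Fin k → ℚ) (P : Fin (m + k) → ℚ)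
    (SD SF : Finset (Fin (m + k))) : Prop :=
  ((SD.sort (· ≤ ·)).map P = List.ofFn d) ∧ ((SF.sort (· ≤ ·)).map P = List.ofFn f)

/-- If an `e`-permutation of `(d, f)` exists, then `e` agrees with the nonincreasing
rearrangement `g` of the concatenation of `d` and `f` on all indices where `g` is below
the minimal value `μ = d (m-1)` of `d`. -/
private lemma list_map_eq_pointwise {α β : Type*} :
    ∀ (l : List α) (P Q : α → β), l.map P = l.map Q → ∀ i ∈ l, P i = Q i := by
  intro l P Q h i hi
  induction l with
  | nil => simp at hi
  | cons a t ih =>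
    simp only [List.map_cons, List.cons.injEq] at h
    rcases List.mem_cons.mp hi with rfl | hi'
    · exact h.1
    · exact ih h.2 hi'

theorem tail_below_min_slope_eq {m k : ℕ} (hm : 1 ≤ m) (d : Fin m → ℚ) (f : Fin k → ℚ)
    (e g : Fin (m + k) → ℚ) (hd : Antitone d) (hf : Antitone f) (he : Antitone e)
    (hg : Antitone g) (hgval : valMS g = valMS d + valMS f)
    (hex : ∃ P : Fin (m + k) → ℚ, IsEPerm d f e P) :
    ∀ i : Fin (m + k), g i < d ⟨m - 1, by omega⟩ → e i = g i := by
  classical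
  obtain ⟨P, hPval, ⟨hdom, htot⟩, hcond⟩ := hex
  set μ : ℚ := d ⟨m - 1, by omega⟩ with hμ
  have hdmin : ∀ x ∈ valMS d, μ ≤ x := by
    intro x hx
    obtain ⟨j, -, rfl⟩ := Multiset.mem_map.mp hx
    exact hd (by rw [Fin.le_def]; have := j.2; simp; omega)
  have hPg : valMS P = valMS g := by rw [hPval, hgval]
  set A := Finset.univ.filter (fun i : Fin (m + k) => g i < μ) with hA
  set C := Finset.univ.filter (fun i : Fin (m + k) => P i < μ) with hC
  set B := Finset.univ.filter (fun i : Fin (m + k) => e i < μ) with hB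
  -- cardinalities of A and C agree
  have hmapA : A.val.map g = (valMS g).filter (fun x => x < μ) := by
    rw [valMS, Multiset.filter_map, hA, Finset.filter_val]
    rfl
  have hmapC : C.val.map P = (valMS g).filter (fun x => x < μ) := by
    rw [← hPg, valMS, Multiset.filter_map, hC, Finset.filter_val]
    rfl
  have hcardAC : A.card = C.card := by
    have := congrArg Multiset.card hmapA
    have h2 := congrArg Multiset.card hmapC
    simp only [Multiset.card_map] at this h2
    rw [← Finset.card_def] at *
    omega
  -- C ⊆ B
  have hCB : C ⊆ B := by
    intro i hi
    rw [hC, Finset.mem_filter] at hi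
    rw [hB, Finset.mem_filter]
    refine ⟨Finset.mem_univ _, ?_⟩
    rcases lt_or_ge (P i) (e i) with hlt | hle
    · exact absurd (hdmin _ ((hcond i).1 hlt)) (not_le.mpr hi.2)
    · exact lt_of_le_of_lt hle hi.2
  -- A ⊆ B (both are up-sets, and |A| = |C| ≤ |B|)
  have hAB : A ⊆ B := by
    intro i hi
    by_contra hib
    rw [hA, Finset.mem_filter] at hi
    rw [hB, Finset.mem_filter, not_and, not_lt] at hib
    have hei : μ ≤ e i := hib (Finset.mem_univ _)
    have h1 : Finset.Ici i ⊆ A := by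
      intro j hj
      rw [hA, Finset.mem_filter]
      exact ⟨Finset.mem_univ _, lt_of_le_of_lt (hg (Finset.mem_Ici.mp hj)) hi.2⟩
    have h2 : B ⊆ Finset.Ioi i := by
      intro j hj
      rw [hB, Finset.mem_filter] at hj
      rw [Finset.mem_Ioi]
      by_contra hji
      exact absurd (le_trans hei (he (not_lt.mp hji))) (not_le.mpr hj.2)
    have c1 : (Finset.Ici i).card ≤ A.card := Finset.card_le_card h1
    have c2 : B.card ≤ (Finset.Ioi i).card := Finset.card_le_card h2
    have c3 : C.card ≤ B.card := Finset.card_le_card hCB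
    rw [Fin.card_Ici] at c1
    rw [Fin.card_Ioi] at c2
    have := i.2
    omega
  -- e ≤ P pointwise on A
  have heP : ∀ i ∈ A, e i ≤ P i := by
    intro i hi
    have hiB := hAB hi
    rw [hB, Finset.mem_filter] at hiB
    rcases lt_or_ge (P i) (e i) with hlt | hle
    · exact absurd (hdmin _ ((hcond i).1 hlt)) (not_le.mpr (lt_trans hlt hiB.2))
    · exact hle
  -- sum over the complement of A : e-sum ≤ P-sum via domination
  have hAc : ∑ i ∈ Aᶜ, e i ≤ ∑ i ∈ Aᶜ, P i := by
    rcases Finset.eq_empty_or_nonempty (Aᶜ) with hemp | hne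
    · rw [hemp]; simp
    · have hj0 := Finset.max'_mem _ hne
      set j0 := Finset.max' _ hne with hj0def
      have hAcIic : Aᶜ = Finset.Iic j0 := by
        ext j
        constructor
        · intro hj
          exact Finset.mem_Iic.mpr (Finset.le_max' _ _ hj)
        · intro hj
          rw [Finset.mem_compl, hA, Finset.mem_filter, not_and, not_lt]
          intro _
          have hj0A : ¬ g j0 < μ := by
            have := Finset.mem_compl.mp hj0
            rw [hA, Finset.mem_filter, not_and, not_lt] at this
            exact not_lt.mpr (this (Finset.mem_univ _))
          exact le_trans (not_lt.mp hj0A) (hg (Finset.mem_Iic.mp hj))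
      rw [hAcIic]
      exact hdom j0
  have hsumA : ∑ i ∈ A, e i ≤ ∑ i ∈ A, P i := Finset.sum_le_sum heP
  have htots : ∑ i ∈ A, P i + ∑ i ∈ Aᶜ, P i = ∑ i ∈ A, e i + ∑ i ∈ Aᶜ, e i := by
    rw [Finset.sum_add_sum_compl, Finset.sum_add_sum_compl]
    exact htot
  have hAeq : ∑ i ∈ A, e i = ∑ i ∈ A, P i := le_antisymm hsumA (by linarith)
  have hEP : ∀ i ∈ A, e i = P i := (Finset.sum_eq_sum_iff_of_le heP).mp hAeq
  -- A = C
  have hAC : A = C := by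
    apply Finset.eq_of_subset_of_card_le _ (le_of_eq hcardAC.symm)
    intro i hi
    rw [hC, Finset.mem_filter]
    refine ⟨Finset.mem_univ _, ?_⟩
    rw [← hEP i hi]
    have := hAB hi
    rw [hB, Finset.mem_filter] at this
    exact this.2
  -- multisets of P and g over A agree
  have hms : A.val.map P = A.val.map g := by
    rw [hmapA, hAC, hmapC]
  -- pass to sorted lists
  set l := A.sort (· ≤ ·) with hl
  have hlval : (l : Multiset (Fin (m + k))) = A.val := Finset.sort_eq A _
  have hperm : List.Perm (l.map P) (l.map g) := by
    rw [← Multiset.coe_eq_coe, ← Multiset.map_coe, ← Multiset.map_coe, hlval, hms]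
  have hsort : l.Pairwise (· ≤ ·) := Finset.pairwise_sort _ _
  haveI : Std.Antisymm (fun a b : ℚ => b ≤ a) := ⟨fun a b h1 h2 => le_antisymm h2 h1⟩
  have hsP : List.Pairwise (fun a b : ℚ => b ≤ a) (l.map P) := by
    rw [List.pairwise_map]
    refine hsort.imp_of_mem ?_
    intro a b ha hb hab
    rw [← hEP a ((Finset.mem_sort _).mp ha), ← hEP b ((Finset.mem_sort _).mp hb)]
    exact he hab
  have hsg : List.Pairwise (fun a b : ℚ => b ≤ a) (l.map g) := by
    rw [List.pairwise_map]
    exact hsort.imp (fun hab => hg hab)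
  have heqlist : l.map P = l.map g := List.Perm.eq_of_pairwise' hsP hsg hperm
  -- conclude
  intro i hgi
  have hiA : i ∈ A := by rw [hA, Finset.mem_filter]; exact ⟨Finset.mem_univ _, hgi⟩
  have hil : i ∈ l := (Finset.mem_sort _).mpr hiA
  rw [hEP i hiA, list_map_eq_pointwise l P g heqlist i hil]
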